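/- Let 0 < α < 1 and 0 < τ < 1, and let x ∈ ℝ, t > 0. For ε > 0 and φ ∈ [−π, π] set h(ε, φ) = √( (1 + τ·ε^α·e^{iαφ}) / (1 + ε^α·e^{iαφ}) ). Then lim_{ε → 0⁺} ∫_{−π}^{π} h(ε, φ) · exp( −|x|·ε·e^{iφ}·h(ε, φ) + t·ε·e^{iφ} ) dφ = 2π. -/

import Mathlib

open Real Complex Filter MeasureTheory Topology

lemma aux_den_ne (r : ℝ) (hr0 : 0 ≤ r) (hr : r ≤ 1/2) (z : ℂ) (hz : ‖z‖ = 1) :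
    (1 + (r:ℂ) * z) ≠ 0 := by
  intro h
  have h2 : (r:ℂ) * z = -1 := by linear_combination h
  have := congrArg norm h2
  simp [norm_mul, hz, Complex.norm_real, _root_.abs_of_nonneg hr0] at this
  linarith

lemma aux_re_pos (τ r : ℝ) (hτ0 : 0 < τ) (hτ1 : τ < 1) (hr0 : 0 ≤ r) (hr : r ≤ 1/2)
    (z : ℂ) (hz : ‖z‖ = 1) :
    0 < ((1 + (τ:ℂ) * r * z) / (1 + (r:ℂ) * z)).re := by
  have hb := aux_den_ne r hr0 hr z hz
  have hnormsq : Complex.normSq z = 1 := by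
    rw [← Complex.sq_norm, hz]; norm_num
  have hc : |z.re| ≤ 1 := by simpa [hz] using Complex.abs_re_le_norm z
  have hc1 : -1 ≤ z.re := by linarith [abs_nonneg z.re, neg_abs_le z.re]
  have hcs : z.re * z.re + z.im * z.im = 1 := by
    simpa [Complex.normSq_apply] using hnormsq
  rw [Complex.div_re, ← add_div]
  apply div_pos
  · have h1 : (1 + (τ:ℂ) * r * z).re = 1 + τ * r * z.re := by simp
    have h2 : (1 + (τ:ℂ) * r * z).im = τ * r * z.im := by simp
    have h3 : (1 + (r:ℂ) * z).re = 1 + r * z.re := by simp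
    have h4 : (1 + (r:ℂ) * z).im = r * z.im := by simp
    rw [h1, h2, h3, h4]
    have hfac : 0 < (1-r)*(1-τ*r) := mul_pos (by linarith) (by nlinarith)
    nlinarith [hfac, mul_nonneg (mul_nonneg (by linarith : (0:ℝ) ≤ 1+τ) hr0)
      (by linarith : (0:ℝ) ≤ z.re + 1), mul_nonneg (mul_nonneg hτ0.le (mul_nonneg hr0 hr0))
      (by nlinarith : (0:ℝ) ≤ z.re*z.re + z.im*z.im - 1 + 1 - 1)]
  · exact Complex.normSq_pos.mpr hb

lemma aux_abs_h (τ r : ℝ) (hτ0 : 0 < τ) (hτ1 : τ < 1) (hr0 : 0 ≤ r) (hr : r ≤ 1/2)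
    (z : ℂ) (hz : ‖z‖ = 1) :
    ‖((1 + (τ:ℂ) * r * z) / (1 + (r:ℂ) * z)) ^ (1/2 : ℂ)‖ ≤ 2 := by
  have hb := aux_den_ne r hr0 hr z hz
  have habs_num : ‖1 + (τ:ℂ) * r * z‖ ≤ 3/2 := by
    calc ‖1 + (τ:ℂ) * r * z‖ ≤ ‖(1:ℂ)‖ + ‖(τ:ℂ) * r * z‖ :=
          norm_add_le _ _
    _ ≤ 3/2 := by
        simp only [norm_one, norm_mul, hz, Complex.norm_real, Real.norm_eq_abs,
          _root_.abs_of_nonneg hr0, _root_.abs_of_nonneg hτ0.le, mul_one]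
        nlinarith
  have habs_den : 1/2 ≤ ‖1 + (r:ℂ) * z‖ := by
    have h1 := norm_sub_norm_le (1:ℂ) (-((r:ℂ)*z))
    simp only [sub_neg_eq_add, norm_neg, norm_one, norm_mul,
      Complex.norm_real, Real.norm_eq_abs, _root_.abs_of_nonneg hr0, hz, mul_one] at h1
    linarith
  have hratio : ‖(1 + (τ:ℂ) * r * z) / (1 + (r:ℂ) * z)‖ ≤ 3 := by
    rw [norm_div, div_le_iff₀ (by linarith)]
    linarith
  have hc : ((1/2 : ℂ)) = (((1/2 : ℝ)):ℂ) := by norm_num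
  rw [hc, Complex.norm_cpow_real]
  calc ‖(1 + (τ:ℂ) * r * z) / (1 + (r:ℂ) * z)‖ ^ (1/2:ℝ)
      ≤ (4:ℝ) ^ (1/2:ℝ) := Real.rpow_le_rpow (norm_nonneg _) (by linarith) (by norm_num)
    _ = 2 := by
        rw [show (4:ℝ) = 2^(2:ℕ) by norm_num, ← Real.rpow_natCast 2 2,
          ← Real.rpow_mul (by norm_num)]
        norm_num

lemma aux_abs_z (θ : ℝ) : ‖Complex.exp (Complex.I * (θ:ℝ))‖ = 1 := by
  rw [Complex.norm_exp]
  simp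

theorem small_circle_integral_tendsto_two_pi
    (α τ : ℝ) (hα0 : 0 < α) (hα1 : α < 1) (hτ0 : 0 < τ) (hτ1 : τ < 1)
    (x t : ℝ) (ht : 0 < t)
    (h : ℝ → ℝ → ℂ)
    (hh : ∀ ε φ : ℝ, h ε φ =
      ((1 + (τ : ℂ) * ((ε ^ α : ℝ) : ℂ) * Complex.exp (Complex.I * (α * φ : ℝ))) /
        (1 + ((ε ^ α : ℝ) : ℂ) * Complex.exp (Complex.I * (α * φ : ℝ)))) ^ (1/2 : ℂ)) :
    Tendsto
      (fun ε : ℝ => ∫ φ in (-Real.pi)..Real.pi,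
        h ε φ * Complex.exp (-((|x| : ℝ) : ℂ) * (ε : ℂ) * Complex.exp (Complex.I * (φ : ℝ)) * h ε φ
          + (t : ℂ) * (ε : ℂ) * Complex.exp (Complex.I * (φ : ℝ))))
      (nhdsWithin 0 (Set.Ioi 0)) (nhds ((2 * Real.pi : ℝ) : ℂ)) := by
  have hπ := Real.pi_pos
  -- rewrite target constant as an integral
  have hconst : ((2 * Real.pi : ℝ) : ℂ) = ∫ φ in (-Real.pi)..Real.pi, (1:ℂ) := by
    rw [intervalIntegral.integral_const]
    push_cast [Complex.real_smul]
    ring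
  rw [hconst]
  -- ε^α → 0 along 𝓝[>] 0
  have hrp : Tendsto (fun ε : ℝ => ε ^ α) (𝓝[>] (0:ℝ)) (𝓝 0) := by
    have h1 : ContinuousAt (fun ε : ℝ => ε ^ α) 0 :=
      Real.continuousAt_rpow_const 0 α (Or.inr hα0.le)
    have h2 := h1.tendsto.mono_left (nhdsWithin_le_nhds : 𝓝[>] (0:ℝ) ≤ 𝓝 0)
    simpa [Real.zero_rpow hα0.ne'] using h2
  have hev : ∀ᶠ ε in 𝓝[>] (0:ℝ), 0 < ε ∧ ε ≤ 1 ∧ ε ^ α ≤ 1/2 := by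
    filter_upwards [self_mem_nhdsWithin,
      hrp.eventually (eventually_le_nhds (by norm_num : (0:ℝ) < 1/2)),
      (tendsto_id.mono_right nhdsWithin_le_nhds :
        Tendsto id (𝓝[>] (0:ℝ)) (𝓝 0)).eventually
        (eventually_le_nhds (by norm_num : (0:ℝ) < 1))] with ε h1 h2 h3
    exact ⟨h1, h3, h2⟩
  apply intervalIntegral.tendsto_integral_filter_of_dominated_convergence
    (bound := fun _ => 2 * Real.exp (2 * |x| + t))
  · -- measurability
    filter_upwards [hev] with ε ⟨hε0, hε1, hεα⟩
    have hr0 : 0 ≤ ε ^ α := Real.rpow_nonneg hε0.le α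
    have hcont : Continuous fun φ : ℝ =>
        h ε φ * Complex.exp (-((|x| : ℝ) : ℂ) * (ε : ℂ) * Complex.exp (Complex.I * (φ : ℝ)) * h ε φ
          + (t : ℂ) * (ε : ℂ) * Complex.exp (Complex.I * (φ : ℝ))) := by
      have cz : Continuous fun φ : ℝ => Complex.exp (Complex.I * ((α * φ : ℝ) : ℂ)) :=
        Complex.continuous_exp.comp (continuous_const.mul
          (Complex.continuous_ofReal.comp (continuous_const.mul continuous_id)))
      have cz1 : Continuous fun φ : ℝ => Complex.exp (Complex.I * ((φ : ℝ) : ℂ)) :=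
        Complex.continuous_exp.comp (continuous_const.mul Complex.continuous_ofReal)
      have cnum : Continuous fun φ : ℝ =>
          1 + (τ : ℂ) * ((ε ^ α : ℝ) : ℂ) * Complex.exp (Complex.I * ((α * φ : ℝ) : ℂ)) :=
        continuous_const.add (continuous_const.mul cz)
      have cden : Continuous fun φ : ℝ =>
          1 + ((ε ^ α : ℝ) : ℂ) * Complex.exp (Complex.I * ((α * φ : ℝ) : ℂ)) :=
        continuous_const.add (continuous_const.mul cz)
      have cratio : Continuous fun φ : ℝ =>
          (1 + (τ : ℂ) * ((ε ^ α : ℝ) : ℂ) * Complex.exp (Complex.I * ((α * φ : ℝ) : ℂ))) /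
            (1 + ((ε ^ α : ℝ) : ℂ) * Complex.exp (Complex.I * ((α * φ : ℝ) : ℂ))) :=
        cnum.div cden fun φ => aux_den_ne _ hr0 hεα _ (aux_abs_z _)
      have chε : Continuous (h ε) := by
        rw [show h ε = fun φ => ((1 + (τ : ℂ) * ((ε ^ α : ℝ) : ℂ) *
            Complex.exp (Complex.I * ((α * φ : ℝ) : ℂ))) /
            (1 + ((ε ^ α : ℝ) : ℂ) * Complex.exp (Complex.I * ((α * φ : ℝ) : ℂ)))) ^ (1/2 : ℂ)
          from funext fun φ => hh ε φ]
        rw [continuous_iff_continuousAt]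
        intro φ
        exact cratio.continuousAt.cpow continuousAt_const
          (Or.inl (aux_re_pos τ _ hτ0 hτ1 hr0 hεα _ (aux_abs_z _)))
      exact chε.mul (Complex.continuous_exp.comp
        (((continuous_const.mul cz1).mul chε).add (continuous_const.mul cz1)))
    exact hcont.aestronglyMeasurable
  · -- bound
    filter_upwards [hev] with ε ⟨hε0, hε1, hεα⟩
    refine Filter.Eventually.of_forall fun φ _ => ?_
    have hr0 : 0 ≤ ε ^ α := Real.rpow_nonneg hε0.le α
    have habsh : ‖h ε φ‖ ≤ 2 := by
      rw [hh]; exact aux_abs_h τ _ hτ0 hτ1 hr0 hεα _ (aux_abs_z _)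
    rw [norm_mul, Complex.norm_exp]
    have hre : (-((|x| : ℝ) : ℂ) * (ε : ℂ) * Complex.exp (Complex.I * (φ : ℝ)) * h ε φ
        + (t : ℂ) * (ε : ℂ) * Complex.exp (Complex.I * (φ : ℝ))).re ≤ 2 * |x| + t := by
      refine le_trans (Complex.re_le_norm _) ?_
      refine le_trans (norm_add_le _ _) ?_
      rw [norm_mul, norm_mul, norm_mul, norm_mul, norm_mul, norm_neg,
        aux_abs_z, Complex.norm_real, Complex.norm_real, Complex.norm_real,
        Real.norm_eq_abs, Real.norm_eq_abs, Real.norm_eq_abs,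
        _root_.abs_abs, _root_.abs_of_nonneg hε0.le, _root_.abs_of_nonneg ht.le]
      have h1 : |x| * ε * 1 * ‖h ε φ‖ ≤ |x| * 1 * 1 * 2 := by
        have := abs_nonneg x
        gcongr
      have h2 : t * ε * 1 ≤ t * 1 * 1 := by gcongr
      linarith
    have : ‖h ε φ‖ * Real.exp (-((|x| : ℝ) : ℂ) * (ε : ℂ) *
        Complex.exp (Complex.I * (φ : ℝ)) * h ε φ
        + (t : ℂ) * (ε : ℂ) * Complex.exp (Complex.I * (φ : ℝ))).re
        ≤ 2 * Real.exp (2 * |x| + t) :=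
      mul_le_mul habsh (Real.exp_le_exp.mpr hre) (Real.exp_pos _).le (by norm_num)
    exact this
  · exact intervalIntegrable_const
  · -- pointwise limit
    refine Filter.Eventually.of_forall fun φ _ => ?_
    have hrc : Tendsto (fun ε : ℝ => ((ε ^ α : ℝ) : ℂ)) (𝓝[>] (0:ℝ)) (𝓝 0) := by
      have := (Complex.continuous_ofReal.tendsto 0).comp hrp
      simpa [Function.comp_def] using this
    have hεc : Tendsto (fun ε : ℝ => ((ε : ℝ) : ℂ)) (𝓝[>] (0:ℝ)) (𝓝 0) := by
      have := (Complex.continuous_ofReal.tendsto 0).comp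
        (tendsto_id.mono_right nhdsWithin_le_nhds : Tendsto id (𝓝[>] (0:ℝ)) (𝓝 0))
      simpa using this
    have hnum : Tendsto (fun ε : ℝ =>
        1 + (τ : ℂ) * ((ε ^ α : ℝ) : ℂ) * Complex.exp (Complex.I * ((α * φ : ℝ) : ℂ)))
        (𝓝[>] (0:ℝ)) (𝓝 1) := by
      have h1 : Tendsto (fun ε : ℝ =>
          (τ : ℂ) * ((ε ^ α : ℝ) : ℂ) * Complex.exp (Complex.I * ((α * φ : ℝ) : ℂ)))
          (𝓝[>] (0:ℝ)) (𝓝 ((τ : ℂ) * 0 * Complex.exp (Complex.I * ((α * φ : ℝ) : ℂ)))) :=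
        (tendsto_const_nhds.mul hrc).mul tendsto_const_nhds
      have h2 := (tendsto_const_nhds : Tendsto (fun _ : ℝ => (1:ℂ)) (𝓝[>] (0:ℝ)) _).add h1
      simpa using h2
    have hden : Tendsto (fun ε : ℝ =>
        1 + ((ε ^ α : ℝ) : ℂ) * Complex.exp (Complex.I * ((α * φ : ℝ) : ℂ)))
        (𝓝[>] (0:ℝ)) (𝓝 1) := by
      have h1 : Tendsto (fun ε : ℝ =>
          ((ε ^ α : ℝ) : ℂ) * Complex.exp (Complex.I * ((α * φ : ℝ) : ℂ)))
          (𝓝[>] (0:ℝ)) (𝓝 ((0:ℂ) * Complex.exp (Complex.I * ((α * φ : ℝ) : ℂ)))) :=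
        hrc.mul tendsto_const_nhds
      have h2 := (tendsto_const_nhds : Tendsto (fun _ : ℝ => (1:ℂ)) (𝓝[>] (0:ℝ)) _).add h1
      simpa using h2
    have hratio := hnum.div hden one_ne_zero
    rw [div_one] at hratio
    have hcpow : ContinuousAt (fun z : ℂ => z ^ (1/2 : ℂ)) 1 :=
      continuousAt_cpow_const (by simp [Complex.mem_slitPlane_iff])
    have hhp : Tendsto (fun ε : ℝ => h ε φ) (𝓝[>] (0:ℝ)) (𝓝 1) := by
      have := hcpow.tendsto.comp hratio
      rw [Complex.one_cpow] at this
      refine this.congr fun ε => ?_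
      simp [hh, Function.comp]
    have hexp : Tendsto (fun ε : ℝ =>
        Complex.exp (-((|x| : ℝ) : ℂ) * (ε : ℂ) * Complex.exp (Complex.I * (φ : ℝ)) * h ε φ
          + (t : ℂ) * (ε : ℂ) * Complex.exp (Complex.I * (φ : ℝ))))
        (𝓝[>] (0:ℝ)) (𝓝 1) := by
      have harg : Tendsto (fun ε : ℝ =>
          -((|x| : ℝ) : ℂ) * (ε : ℂ) * Complex.exp (Complex.I * (φ : ℝ)) * h ε φ
            + (t : ℂ) * (ε : ℂ) * Complex.exp (Complex.I * (φ : ℝ)))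
          (𝓝[>] (0:ℝ)) (𝓝 0) := by
        have ha : Tendsto (fun ε : ℝ =>
            -((|x| : ℝ) : ℂ) * (ε : ℂ) * Complex.exp (Complex.I * (φ : ℝ)) * h ε φ)
            (𝓝[>] (0:ℝ))
            (𝓝 (-((|x| : ℝ) : ℂ) * 0 * Complex.exp (Complex.I * (φ : ℝ)) * 1)) :=
          ((tendsto_const_nhds.mul hεc).mul tendsto_const_nhds).mul hhp
        have hb : Tendsto (fun ε : ℝ =>
            (t : ℂ) * (ε : ℂ) * Complex.exp (Complex.I * (φ : ℝ)))
            (𝓝[>] (0:ℝ)) (𝓝 ((t : ℂ) * 0 * Complex.exp (Complex.I * (φ : ℝ)))) :=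
          (tendsto_const_nhds.mul hεc).mul tendsto_const_nhds
        have := ha.add hb
        simpa using this
      have := (Complex.continuous_exp.tendsto 0).comp harg
      simpa [Function.comp_def] using this
    have := hhp.mul hexp
    simpa using this
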